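/- Let λ ∈ ℂ, m, n ≥ 1, and X ∈ ℂ^{m×n}. Then J_m(λ)·X = X·J_n(λ) if and only if X is a rectangular upper-triangular Toeplitz matrix aligned to the top-right corner, i.e., writing b := min(m,n): X_{i,j} = 0 whenever j − i < n − b, and X_{i,j} = X_{i+1,j+1} for all 1 ≤ i ≤ m−1, 1 ≤ j ≤ n−1. Equivalently, X = [0 T] if m < n, X = [T; 0] if m > n, and X = T if m = n, where T is a b×b upper-triangular Toeplitz matrix. -/
import Mathlib


open Matrix

/-- The `n × n` upper-triangular Jordan block `J_n(λ)`. -/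
def Jmat (n : ℕ) (lam : ℂ) : Matrix (Fin n) (Fin n) ℂ :=
  Matrix.of fun i j => if (j : ℕ) = (i : ℕ) then lam else if (j : ℕ) = (i : ℕ) + 1 then 1 else 0

lemma Jmul {lam : ℂ} {m n : ℕ} (X : Matrix (Fin m) (Fin n) ℂ) (i : Fin m) (j : Fin n) :
    (Jmat m lam * X) i j
      = lam * X i j + (if h : (i : ℕ) + 1 < m then X ⟨(i : ℕ) + 1, h⟩ j else 0) := by
  rw [mul_apply]
  by_cases h : (i : ℕ) + 1 < m
  · rw [dif_pos h]
    rw [Finset.sum_eq_add_of_mem i ⟨(i : ℕ) + 1, h⟩ (Finset.mem_univ _) (Finset.mem_univ _)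
      (by simp [Fin.ext_iff]) ?_]
    · simp [Jmat]
    · intro k _ hk
      simp only [Jmat, of_apply]
      rw [if_neg, if_neg, zero_mul]
      · simp [Fin.ext_iff] at hk; omega
      · simp [Fin.ext_iff] at hk; omega
  · rw [dif_neg h, add_zero]
    rw [Finset.sum_eq_single i]
    · simp [Jmat]
    · intro k _ hk
      simp only [Jmat, of_apply]
      rw [if_neg, if_neg, zero_mul]
      · simp [Fin.ext_iff] at hk; omega
      · simp [Fin.ext_iff] at hk; omega
    · simp

lemma mulJ {lam : ℂ} {m n : ℕ} (X : Matrix (Fin m) (Fin n) ℂ) (i : Fin m) (j : Fin n) :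
    (X * Jmat n lam) i j
      = lam * X i j + (if h : 0 < (j : ℕ) then X i ⟨(j : ℕ) - 1, by omega⟩ else 0) := by
  rw [mul_apply]
  by_cases h : 0 < (j : ℕ)
  · rw [dif_pos h]
    rw [Finset.sum_eq_add_of_mem j ⟨(j : ℕ) - 1, by omega⟩ (Finset.mem_univ _) (Finset.mem_univ _)
      (by simp [Fin.ext_iff]; omega) ?_]
    · have h1 : ¬ ((j : ℕ) = (j : ℕ) - 1) := by omega
      have h2 : (j : ℕ) = (j : ℕ) - 1 + 1 := by omega
      simp only [Jmat, of_apply, if_pos rfl, if_neg h1, if_pos h2, if_true]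
      ring
    · intro k _ hk
      simp only [Jmat, of_apply]
      rw [if_neg, if_neg, mul_zero]
      · simp [Fin.ext_iff] at hk; omega
      · simp [Fin.ext_iff] at hk; omega
  · rw [dif_neg h, add_zero]
    rw [Finset.sum_eq_single j]
    · simp [Jmat, mul_comm]
    · intro k _ hk
      simp only [Jmat, of_apply]
      rw [if_neg, if_neg, mul_zero]
      · simp [Fin.ext_iff] at hk; omega
      · simp [Fin.ext_iff] at hk; omega
    · simp

/-- `J_m(λ)·X = X·J_n(λ)` iff `X` is a rectangular upper-triangular
Toeplitz matrix aligned to the top-right corner: with `b = min(m,n)`, `X_{ij} = 0`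
whenever `j − i < n − b`, and `X_{i,j} = X_{i+1,j+1}`. -/
theorem stmt6 (lam : ℂ) (m n : ℕ) (hm : 1 ≤ m) (hn : 1 ≤ n)
    (X : Matrix (Fin m) (Fin n) ℂ) :
    Jmat m lam * X = X * Jmat n lam ↔
      ((∀ (i : Fin m) (j : Fin n), (j : ℕ) + min m n < (i : ℕ) + n → X i j = 0) ∧
        ∀ (i : Fin m) (j : Fin n) (hi : (i : ℕ) + 1 < m) (hj : (j : ℕ) + 1 < n),
          X i j = X ⟨(i : ℕ) + 1, hi⟩ ⟨(j : ℕ) + 1, hj⟩) := by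
  constructor
  · intro h
    have E : ∀ (i : Fin m) (j : Fin n),
        (if h : (i : ℕ) + 1 < m then X ⟨(i : ℕ) + 1, h⟩ j else 0)
          = (if h : 0 < (j : ℕ) then X i ⟨(j : ℕ) - 1, by omega⟩ else 0) := by
      intro i j
      have h' := congrFun (congrFun h i) j
      rw [Jmul, mulJ] at h'
      exact add_left_cancel h'
    -- Toeplitz condition
    have T : ∀ (i : Fin m) (j : Fin n) (hi : (i : ℕ) + 1 < m) (hj : (j : ℕ) + 1 < n),
        X i j = X ⟨(i : ℕ) + 1, hi⟩ ⟨(j : ℕ) + 1, hj⟩ := by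
      intro i j hi hj
      have h' := E i ⟨(j : ℕ) + 1, hj⟩
      rw [dif_pos hi, dif_pos (by simp)] at h'
      rw [h']
      congr 1
    -- shift lemma
    have S : ∀ (t : ℕ) (i : Fin m) (j : Fin n) (hi : (i : ℕ) + t < m) (hj : (j : ℕ) + t < n),
        X i j = X ⟨(i : ℕ) + t, hi⟩ ⟨(j : ℕ) + t, hj⟩ := by
      intro t
      induction t with
      | zero => intro i j hi hj; congr 1 <;> exact Fin.ext (by simp)
      | succ t ih =>
        intro i j hi hj
        rw [ih i j (by omega) (by omega),
          T ⟨(i : ℕ) + t, by omega⟩ ⟨(j : ℕ) + t, by omega⟩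
            (by simp only [Fin.val_mk]; omega) (by simp only [Fin.val_mk]; omega)]
        congr 1 <;> exact Fin.ext (by simp only [Fin.val_mk]; omega)
    refine ⟨?_, T⟩
    -- zero condition
    intro i j hij
    by_cases hmn : m ≤ n
    · -- shift down-right to the last row
      have hb : min m n = m := by omega
      rw [hb] at hij
      have ht : (j : ℕ) + (m - 1 - (i : ℕ)) + 1 < n := by omega
      rw [S (m - 1 - (i : ℕ)) i j (by omega) (by omega)]
      have h' := E ⟨(i : ℕ) + (m - 1 - (i : ℕ)), by omega⟩ ⟨(j : ℕ) + (m - 1 - (i : ℕ)) + 1, ht⟩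
      rw [dif_neg (by simp only [Fin.val_mk]; omega),
        dif_pos (by simp only [Fin.val_mk]; omega)] at h'
      convert h'.symm using 2
      all_goals exact Fin.ext (by simp only [Fin.val_mk]; omega)
    · -- shift from the first column
      have hb : min m n = n := by omega
      rw [hb] at hij
      have h1 : (i : ℕ) - (j : ℕ) < m := by omega
      have h2 : (0 : ℕ) < n := hn
      have h' := E ⟨(i : ℕ) - (j : ℕ) - 1, by omega⟩ ⟨0, h2⟩
      rw [dif_pos (by simp only [Fin.val_mk]; try omega),
        dif_neg (by simp only [Fin.val_mk]; try omega)] at h'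
      have h'' := S (j : ℕ) ⟨(i : ℕ) - (j : ℕ), h1⟩ ⟨0, h2⟩
        (by simp only [Fin.val_mk]; omega) (by simp only [Fin.val_mk]; omega)
      rw [show X i j = X ⟨(i : ℕ) - (j : ℕ) + (j : ℕ), by omega⟩ ⟨0 + (j : ℕ), by omega⟩ by
        congr 1 <;> exact Fin.ext (by simp only [Fin.val_mk]; omega)]
      rw [← h'']
      rw [← h']
      congr 1
      exact Fin.ext (by simp only [Fin.val_mk]; omega)
  · rintro ⟨hz, hT⟩
    ext i j
    rw [Jmul, mulJ]
    congr 1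
    by_cases hi : (i : ℕ) + 1 < m <;> by_cases hj : 0 < (j : ℕ)
    · rw [dif_pos hi, dif_pos hj]
      have h' := hT i ⟨(j : ℕ) - 1, by omega⟩ hi (by simp only [Fin.val_mk]; omega)
      rw [h']
      congr 1
      exact Fin.ext (by simp only [Fin.val_mk]; omega)
    · rw [dif_pos hi, dif_neg hj]
      exact hz ⟨(i : ℕ) + 1, hi⟩ j (by simp only [Fin.val_mk]; omega)
    · rw [dif_neg hi, dif_pos hj]
      refine (hz i ⟨(j : ℕ) - 1, by omega⟩ ?_).symm
      simp only [Fin.val_mk]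
      omega
    · rw [dif_neg hi, dif_neg hj]
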